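/- Let k be a commutative ring, X a set, and Ω a semigroup, and let j : X → DTF(X,Ω) be the map j(x) = stree(x). Then (DTF(X,Ω), {≺_ω, ≻_ω | ω ∈ Ω}, ·), together with j, is the free tridendriform family algebra on X: for any tridendriform family algebra (T', {≺'_ω, ≻'_ω | ω ∈ Ω}, ·') over k and any map f : X → T', there is a unique k-linear map f̄ : DTF(X,Ω) → T' such that f̄(T ≺_ω U) = f̄(T) ≺'_ω f̄(U), f̄(T ≻_ω U) = f̄(T) ≻'_ω f̄(U) and f̄(T·U) = f̄(T) ·' f̄(U) for all T, U ∈ DTF(X,Ω) and ω ∈ Ω, and f = f̄ ∘ j. -/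

import Mathlib

/-- An `X`-valently decorated `Ω`-typed Schröder tree with at least one internal vertex.
`node c₀ mid xₘ cₘ` is the grafting `∨^{m+1}_{x₁,…,xₘ;(α₀,…,αₘ)}(T⁽⁰⁾,…,T⁽ᵐ⁾)`:
the root has children `c₀ = T⁽⁰⁾`, the children `T⁽¹⁾,…,T⁽ᵐ⁻¹⁾` listed in
`mid = [(x₁,T⁽¹⁾),…,(x_{m-1},T⁽ᵐ⁻¹⁾)]`, and the last child `cₘ = T⁽ᵐ⁾`; the root vertex
is decorated by `(x₁,…,xₘ) ∈ X^m`.  A child `none` is a leaf `|` (edge typed by the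
adjoined identity `1 ∈ Ω¹`), a child `some (t, α)` is a nonempty subtree with internal
edge typed `α ∈ Ω`. -/
inductive SchT (X Ω : Type) : Type where
  | node : Option (SchT X Ω × Ω) → List (X × Option (SchT X Ω × Ω)) → X →
      Option (SchT X Ω × Ω) → SchT X Ω

namespace SchT

variable {X Ω : Type}

/-- The single-vertex tree `stree x = ∨²_{x;(1,1)}(|,|)`. -/
def stree (x : X) : SchT X Ω := .node none [] x none

variable [Semigroup Ω] (k : Type) [CommRing k]

mutual
/-- `T ≺_ω U` on trees, with values in the free module on trees. -/
noncomputable def tprec : SchT X Ω → Ω → SchT X Ω → (SchT X Ω →₀ k)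
  | .node c0 mid xm none, ω, U => Finsupp.single (.node c0 mid xm (some (U, ω))) 1
  | .node c0 mid xm (some (t, α)), ω, U =>
      Finsupp.mapDomain (fun s => SchT.node c0 mid xm (some (s, α * ω)))
        (tsucc t α U + tprec t ω U + tdot t U)
  termination_by T _ U => sizeOf T + sizeOf U
  decreasing_by all_goals (simp_wf; omega)

/-- `T ≻_ω U` on trees, with values in the free module on trees. -/
noncomputable def tsucc : SchT X Ω → Ω → SchT X Ω → (SchT X Ω →₀ k)
  | T, ω, .node none mid yn dn => Finsupp.single (.node (some (T, ω)) mid yn dn) 1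
  | T, ω, .node (some (u, β)) mid yn dn =>
      Finsupp.mapDomain (fun s => SchT.node (some (s, ω * β)) mid yn dn)
        (tsucc T ω u + tprec T β u + tdot T u)
  termination_by T _ U => sizeOf T + sizeOf U
  decreasing_by all_goals (simp_wf; omega)

/-- `T · U` on trees, with values in the free module on trees. -/
noncomputable def tdot : SchT X Ω → SchT X Ω → (SchT X Ω →₀ k)
  | .node c0 mid xm none, .node none mid' yn dn =>
      Finsupp.single (.node c0 (mid ++ (xm, none) :: mid') yn dn) 1
  | .node c0 mid xm none, .node (some (u, β)) mid' yn dn =>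
      Finsupp.single (.node c0 (mid ++ (xm, some (u, β)) :: mid') yn dn) 1
  | .node c0 mid xm (some (t, α)), .node none mid' yn dn =>
      Finsupp.single (.node c0 (mid ++ (xm, some (t, α)) :: mid') yn dn) 1
  | .node c0 mid xm (some (t, α)), .node (some (u, β)) mid' yn dn =>
      Finsupp.mapDomain (fun s => SchT.node c0 (mid ++ (xm, some (s, α * β)) :: mid') yn dn)
        (tsucc t α u + tprec t β u + tdot t u)
  termination_by T U => sizeOf T + sizeOf U
  decreasing_by all_goals (simp_wf; omega)
end

/-- The bilinear extension of `≺_ω` to the free module `DTF(X,Ω) = SchT X Ω →₀ k`. -/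
noncomputable def dprec (ω : Ω) (a b : SchT X Ω →₀ k) : SchT X Ω →₀ k :=
  a.sum fun T ca => b.sum fun U cb => (ca * cb) • tprec k T ω U

/-- The bilinear extension of `≻_ω` to the free module `DTF(X,Ω) = SchT X Ω →₀ k`. -/
noncomputable def dsucc (ω : Ω) (a b : SchT X Ω →₀ k) : SchT X Ω →₀ k :=
  a.sum fun T ca => b.sum fun U cb => (ca * cb) • tsucc k T ω U

/-- The bilinear extension of `·` to the free module `DTF(X,Ω) = SchT X Ω →₀ k`. -/
noncomputable def dmul (a b : SchT X Ω →₀ k) : SchT X Ω →₀ k :=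
  a.sum fun T ca => b.sum fun U cb => (ca * cb) • tdot k T U

end SchT

set_option linter.unusedSectionVars false

namespace SchT
section FreeAux
variable {X Ω : Type} [Semigroup Ω] (k : Type) [CommRing k]
  {T' : Type} [AddCommGroup T'] [Module k T']
  (prec' succ' : Ω → T' →ₗ[k] T' →ₗ[k] T') (dot' : T' →ₗ[k] T' →ₗ[k] T') (f : X → T')

/-- The value of the unique morphism on a single tree, defined by structural recursion. -/
noncomputable def phi : SchT X Ω → T'
  | .node (some (t, α)) mid x cm => succ' α (phi t) (phi (.node none mid x cm))
  | .node none [] x none => f x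
  | .node none [] x (some (U, ω)) => prec' ω (f x) (phi U)
  | .node none ((x1, c1) :: mid) xm cm =>
      dot' (f x1) (phi (.node c1 mid xm cm))
  termination_by T => sizeOf T
  decreasing_by all_goals (simp_wf; omega)

omit [Semigroup Ω] in
lemma one_le_sizeOf (T : SchT X Ω) : 1 ≤ sizeOf T := by
  cases T; simp; omega

omit [Semigroup Ω] in
lemma one_le_sizeOf_opt (o : Option (SchT X Ω × Ω)) : 1 ≤ sizeOf o := by
  cases o <;> simp

lemma phi_prec
    (h2 : ∀ (α β : Ω) (x y z : T'),
      prec' β (succ' α x y) z = succ' α x (prec' β y z))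
    (h6 : ∀ (α : Ω) (x y z : T'), prec' α (dot' x y) z = dot' x (prec' α y z)) :
    ∀ (mid : List (X × Option (SchT X Ω × Ω))) (c0 : Option (SchT X Ω × Ω)) (xm : X)
      (U : SchT X Ω) (ω : Ω),
      phi k prec' succ' dot' f (.node c0 mid xm (some (U, ω)))
        = prec' ω (phi k prec' succ' dot' f (.node c0 mid xm none))
            (phi k prec' succ' dot' f U) := by
  intro mid
  induction mid with
  | nil =>
    intro c0 xm U ω
    cases c0 with
    | none => simp [phi]
    | some p => obtain ⟨t, α⟩ := p; simp [phi, h2]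
  | cons hd tl ih =>
    obtain ⟨x1, c1⟩ := hd
    intro c0 xm U ω
    cases c0 with
    | none => simp [phi, ih, h6]
    | some p => obtain ⟨t, α⟩ := p; simp [phi, ih, h2, h6]

lemma phi_dot
    (h4 : ∀ (α : Ω) (x y z : T'), dot' (succ' α x y) z = succ' α x (dot' y z))
    (h7 : ∀ x y z : T', dot' (dot' x y) z = dot' x (dot' y z)) :
    ∀ (mid : List (X × Option (SchT X Ω × Ω))) (c0 : Option (SchT X Ω × Ω)) (xm : X)
      (d0 : Option (SchT X Ω × Ω)) (mid' : List (X × Option (SchT X Ω × Ω))) (yn : X)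
      (dn : Option (SchT X Ω × Ω)),
      phi k prec' succ' dot' f (.node c0 (mid ++ (xm, d0) :: mid') yn dn)
        = dot' (phi k prec' succ' dot' f (.node c0 mid xm none))
            (phi k prec' succ' dot' f (.node d0 mid' yn dn)) := by
  intro mid
  induction mid with
  | nil =>
    intro c0 xm d0 mid' yn dn
    cases c0 with
    | none => simp [phi]
    | some p => obtain ⟨t, α⟩ := p; simp [phi, h4]
  | cons hd tl ih =>
    obtain ⟨x1, c1⟩ := hd
    intro c0 xm d0 mid' yn dn
    cases c0 with
    | none => simp [phi, ih, h7]
    | some p => obtain ⟨t, α⟩ := p; simp [phi, ih, h4, h7]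

/-- The linear extension of `phi`. -/
noncomputable def lphi : (SchT X Ω →₀ k) →ₗ[k] T' :=
  Finsupp.lift T' k (SchT X Ω) (phi k prec' succ' dot' f)

lemma lphi_single (T : SchT X Ω) :
    lphi k prec' succ' dot' f (Finsupp.single T 1) = phi k prec' succ' dot' f T := by
  simp [lphi, Finsupp.lift_apply, Finsupp.sum_single_index]

lemma lphi_mapDomain (ℓ : T' →ₗ[k] T') (g : SchT X Ω → SchT X Ω)
    (hg : ∀ s, phi k prec' succ' dot' f (g s) = ℓ (phi k prec' succ' dot' f s))
    (v : SchT X Ω →₀ k) :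
    lphi k prec' succ' dot' f (Finsupp.mapDomain g v) = ℓ (lphi k prec' succ' dot' f v) := by
  simp only [lphi, Finsupp.lift_apply]
  rw [Finsupp.sum_mapDomain_index]
  · rw [map_finsuppSum]; simp [hg]
  · intro b; simp
  · intro b m₁ m₂; simp [add_smul]

lemma key
    (h1 : ∀ (α β : Ω) (x y z : T'),
      prec' β (prec' α x y) z
        = prec' (α * β) x (prec' β y z + succ' α y z + dot' y z))
    (h2 : ∀ (α β : Ω) (x y z : T'),
      prec' β (succ' α x y) z = succ' α x (prec' β y z))
    (h3 : ∀ (α β : Ω) (x y z : T'),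
      succ' (α * β) (prec' β x y + succ' α x y + dot' x y) z = succ' α x (succ' β y z))
    (h4 : ∀ (α : Ω) (x y z : T'), dot' (succ' α x y) z = succ' α x (dot' y z))
    (h5 : ∀ (α : Ω) (x y z : T'), dot' (prec' α x y) z = dot' x (succ' α y z))
    (h6 : ∀ (α : Ω) (x y z : T'), prec' α (dot' x y) z = dot' x (prec' α y z))
    (h7 : ∀ x y z : T', dot' (dot' x y) z = dot' x (dot' y z)) :
    ∀ (n : ℕ) (T U : SchT X Ω), sizeOf T + sizeOf U ≤ n →
      (∀ ω : Ω, lphi k prec' succ' dot' f (tprec k T ω U)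
          = prec' ω (phi k prec' succ' dot' f T) (phi k prec' succ' dot' f U)) ∧
      (∀ ω : Ω, lphi k prec' succ' dot' f (tsucc k T ω U)
          = succ' ω (phi k prec' succ' dot' f T) (phi k prec' succ' dot' f U)) ∧
      (lphi k prec' succ' dot' f (tdot k T U)
          = dot' (phi k prec' succ' dot' f T) (phi k prec' succ' dot' f U)) := by
  intro n
  induction n with
  | zero =>
    intro T U h
    exfalso
    have := one_le_sizeOf T; have := one_le_sizeOf U; omega
  | succ n ih =>
    intro T U hTU
    refine ⟨?_, ?_, ?_⟩
    · -- tprec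
      intro ω
      obtain ⟨c0, mid, xm, cm⟩ := T
      cases cm with
      | none =>
        simp only [tprec]
        rw [lphi_single, phi_prec k prec' succ' dot' f h2 h6]
      | some p =>
        obtain ⟨t, α⟩ := p
        have hs : sizeOf t + sizeOf U ≤ n := by
          simp only [SchT.node.sizeOf_spec, Option.some.sizeOf_spec,
            Prod.mk.sizeOf_spec] at hTU
          have := one_le_sizeOf t
          omega
        obtain ⟨ihs, ihp, ihd⟩ := ih t U hs
        simp only [tprec]
        rw [lphi_mapDomain k prec' succ' dot' f
          (prec' (α * ω) (phi k prec' succ' dot' f (.node c0 mid xm none)))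
          _ (fun s => phi_prec k prec' succ' dot' f h2 h6 mid c0 xm s (α * ω))]
        simp only [map_add, ihs, ihp, ihd]
        simp only [← map_add]
        rw [phi_prec k prec' succ' dot' f h2 h6 mid c0 xm t α, h1]
        congr 1
        abel
    · -- tsucc
      intro ω
      obtain ⟨d0, mid, yn, dn⟩ := U
      cases d0 with
      | none =>
        simp only [tsucc]
        rw [lphi_single]
        have : phi k prec' succ' dot' f (.node (some (T, ω)) mid yn dn)
            = succ' ω (phi k prec' succ' dot' f T)
                (phi k prec' succ' dot' f (.node none mid yn dn)) := by
          simp [phi]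
        rw [this]
      | some p =>
        obtain ⟨u, β⟩ := p
        have hs : sizeOf T + sizeOf u ≤ n := by
          simp only [SchT.node.sizeOf_spec, Option.some.sizeOf_spec,
            Prod.mk.sizeOf_spec] at hTU
          have := one_le_sizeOf u
          omega
        obtain ⟨ihs, ihp, ihd⟩ := ih T u hs
        simp only [tsucc]
        have hg : ∀ s : SchT X Ω, phi k prec' succ' dot' f (.node (some (s, ω * β)) mid yn dn)
            = (succ' (ω * β)).flip (phi k prec' succ' dot' f (.node none mid yn dn))
                (phi k prec' succ' dot' f s) := by
          intro s; simp [phi]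
        rw [lphi_mapDomain k prec' succ' dot' f
          ((succ' (ω * β)).flip (phi k prec' succ' dot' f (.node none mid yn dn))) _ hg]
        simp only [map_add, ihs, ihp, ihd]
        simp only [← map_add]
        have hU : phi k prec' succ' dot' f (.node (some (u, β)) mid yn dn)
            = succ' β (phi k prec' succ' dot' f u)
                (phi k prec' succ' dot' f (.node none mid yn dn)) := by
          simp [phi]
        rw [hU, ← h3]
        simp only [LinearMap.flip_apply]
        congr 1
        abel
    · -- tdot
      obtain ⟨c0, mid, xm, cm⟩ := T
      obtain ⟨d0, mid', yn, dn⟩ := U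
      cases cm with
      | none =>
        cases d0 with
        | none =>
          simp only [tdot]
          rw [lphi_single, phi_dot k prec' succ' dot' f h4 h7]
        | some p =>
          obtain ⟨u, β⟩ := p
          simp only [tdot]
          rw [lphi_single, phi_dot k prec' succ' dot' f h4 h7]
      | some p =>
        obtain ⟨t, α⟩ := p
        cases d0 with
        | none =>
          simp only [tdot]
          rw [lphi_single, phi_dot k prec' succ' dot' f h4 h7,
            phi_prec k prec' succ' dot' f h2 h6 mid c0 xm t α, h5]
          congr 1
          simp [phi]
        | some q =>
          obtain ⟨u, β⟩ := q
          have hs : sizeOf t + sizeOf u ≤ n := by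
            simp only [SchT.node.sizeOf_spec, Option.some.sizeOf_spec,
              Prod.mk.sizeOf_spec] at hTU
            have := one_le_sizeOf t; have := one_le_sizeOf u
            omega
          obtain ⟨ihs, ihp, ihd⟩ := ih t u hs
          simp only [tdot]
          set A := phi k prec' succ' dot' f (.node c0 mid xm none) with hA
          set B := phi k prec' succ' dot' f (.node none mid' yn dn) with hB
          have hg : ∀ s : SchT X Ω,
              phi k prec' succ' dot' f (.node c0 (mid ++ (xm, some (s, α * β)) :: mid') yn dn)
                = ((dot' A).comp ((succ' (α * β)).flip B)) (phi k prec' succ' dot' f s) := by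
            intro s
            rw [phi_dot k prec' succ' dot' f h4 h7]
            simp only [LinearMap.coe_comp, Function.comp_apply, LinearMap.flip_apply, ← hA, ← hB]
            congr 1
            simp [phi, hB]
          rw [lphi_mapDomain k prec' succ' dot' f _ _ hg]
          simp only [map_add, ihs, ihp, ihd]
          simp only [← map_add]
          have hT : phi k prec' succ' dot' f (.node c0 mid xm (some (t, α)))
              = prec' α A (phi k prec' succ' dot' f t) :=
            phi_prec k prec' succ' dot' f h2 h6 mid c0 xm t α
          have hU : phi k prec' succ' dot' f (.node (some (u, β)) mid' yn dn)
              = succ' β (phi k prec' succ' dot' f u) B := by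
            simp [phi, hB]
          rw [hT, hU, h5, ← h3 α β]
          simp only [LinearMap.coe_comp, Function.comp_apply, LinearMap.flip_apply]
          congr 3
          abel

end FreeAux
end SchT


open SchT in
/-- `DTF(X,Ω)`, together with `j : x ↦ stree x`, is the free
tridendriform family algebra on `X`: for every tridendriform family algebra
`(T', {≺'_ω, ≻'_ω}, ·')` over `k` and every map `f : X → T'` there is a unique
`k`-linear map `f̄ : DTF(X,Ω) → T'` respecting the three families of operations and
satisfying `f̄ ∘ j = f`. -/
theorem DTF_free_tridendriformFamily {X Ω : Type} [Semigroup Ω] (k : Type) [CommRing k]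
    {T' : Type} [AddCommGroup T'] [Module k T']
    (prec' succ' : Ω → T' →ₗ[k] T' →ₗ[k] T') (dot' : T' →ₗ[k] T' →ₗ[k] T')
    (h1 : ∀ (α β : Ω) (x y z : T'),
      prec' β (prec' α x y) z
        = prec' (α * β) x (prec' β y z + succ' α y z + dot' y z))
    (h2 : ∀ (α β : Ω) (x y z : T'),
      prec' β (succ' α x y) z = succ' α x (prec' β y z))
    (h3 : ∀ (α β : Ω) (x y z : T'),
      succ' (α * β) (prec' β x y + succ' α x y + dot' x y) z = succ' α x (succ' β y z))
    (h4 : ∀ (α : Ω) (x y z : T'), dot' (succ' α x y) z = succ' α x (dot' y z))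
    (h5 : ∀ (α : Ω) (x y z : T'), dot' (prec' α x y) z = dot' x (succ' α y z))
    (h6 : ∀ (α : Ω) (x y z : T'), prec' α (dot' x y) z = dot' x (prec' α y z))
    (h7 : ∀ x y z : T', dot' (dot' x y) z = dot' x (dot' y z))
    (f : X → T') :
    ∃! fbar : (SchT X Ω →₀ k) →ₗ[k] T',
      (∀ (ω : Ω) (a b : SchT X Ω →₀ k),
        fbar (dprec k ω a b) = prec' ω (fbar a) (fbar b)) ∧
      (∀ (ω : Ω) (a b : SchT X Ω →₀ k),
        fbar (dsucc k ω a b) = succ' ω (fbar a) (fbar b)) ∧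
      (∀ a b : SchT X Ω →₀ k, fbar (dmul k a b) = dot' (fbar a) (fbar b)) ∧
      (∀ x : X, fbar (Finsupp.single (stree x) (1 : k)) = f x) := by

  have key' := key k prec' succ' dot' f h1 h2 h3 h4 h5 h6 h7
  have hkp : ∀ (T U : SchT X Ω) (ω : Ω), lphi k prec' succ' dot' f (tprec k T ω U)
      = prec' ω (phi k prec' succ' dot' f T) (phi k prec' succ' dot' f U) :=
    fun T U ω => (key' (sizeOf T + sizeOf U) T U le_rfl).1 ω
  have hks : ∀ (T U : SchT X Ω) (ω : Ω), lphi k prec' succ' dot' f (tsucc k T ω U)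
      = succ' ω (phi k prec' succ' dot' f T) (phi k prec' succ' dot' f U) :=
    fun T U ω => (key' (sizeOf T + sizeOf U) T U le_rfl).2.1 ω
  have hkd : ∀ (T U : SchT X Ω), lphi k prec' succ' dot' f (tdot k T U)
      = dot' (phi k prec' succ' dot' f T) (phi k prec' succ' dot' f U) :=
    fun T U => (key' (sizeOf T + sizeOf U) T U le_rfl).2.2
  refine ⟨lphi k prec' succ' dot' f, ⟨?_, ?_, ?_, ?_⟩, ?_⟩
  · intro ω a b
    simp only [dprec, map_finsuppSum, map_smul, hkp]
    simp only [lphi, Finsupp.lift_apply, Finsupp.sum, map_sum, LinearMap.sum_apply,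
      map_smul, LinearMap.smul_apply, Finset.smul_sum, smul_smul]
    rw [Finset.sum_comm]
    simp [mul_comm]
  · intro ω a b
    simp only [dsucc, map_finsuppSum, map_smul, hks]
    simp only [lphi, Finsupp.lift_apply, Finsupp.sum, map_sum, LinearMap.sum_apply,
      map_smul, LinearMap.smul_apply, Finset.smul_sum, smul_smul]
    rw [Finset.sum_comm]
    simp [mul_comm]
  · intro a b
    simp only [dmul, map_finsuppSum, map_smul, hkd]
    simp only [lphi, Finsupp.lift_apply, Finsupp.sum, map_sum, LinearMap.sum_apply,
      map_smul, LinearMap.smul_apply, Finset.smul_sum, smul_smul]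
    rw [Finset.sum_comm]
    simp [mul_comm]
  · intro x
    rw [lphi_single]
    simp [stree, phi]
  · rintro g ⟨hgp, hgs, hgd, hgf⟩
    have hsingle : ∀ (n : ℕ) (T : SchT X Ω), sizeOf T ≤ n →
        g (Finsupp.single T 1) = phi k prec' succ' dot' f T := by
      intro n
      induction n with
      | zero =>
        intro T h
        have := one_le_sizeOf T
        omega
      | succ n ih =>
        intro T hT
        obtain ⟨c0, mid, xm, cm⟩ := T
        cases cm with
        | some p =>
          obtain ⟨U, ω⟩ := p
          have e : dprec k ω (Finsupp.single (SchT.node c0 mid xm none) (1:k))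
              (Finsupp.single U 1)
              = Finsupp.single (SchT.node c0 mid xm (some (U, ω))) (1:k) := by
            simp [dprec, Finsupp.sum_single_index, tprec]
          have s1 : sizeOf (SchT.node c0 mid xm none) ≤ n := by
            simp only [SchT.node.sizeOf_spec, Option.some.sizeOf_spec, Prod.mk.sizeOf_spec,
              Option.none.sizeOf_spec] at hT ⊢
            have := one_le_sizeOf U
            omega
          have s2 : sizeOf U ≤ n := by
            simp only [SchT.node.sizeOf_spec, Option.some.sizeOf_spec,
              Prod.mk.sizeOf_spec] at hT
            omega
          rw [← e, hgp, ih _ s1, ih _ s2,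
            ← phi_prec k prec' succ' dot' f h2 h6 mid c0 xm U ω]
        | none =>
          cases mid with
          | cons hd mid' =>
            obtain ⟨x1, c1⟩ := hd
            have e : dmul k (Finsupp.single (SchT.node c0 [] x1 none) (1:k))
                (Finsupp.single (SchT.node c1 mid' xm none) 1)
                = Finsupp.single (SchT.node c0 ((x1, c1) :: mid') xm none) (1:k) := by
              cases c1 with
              | none => simp [dmul, Finsupp.sum_single_index, tdot]
              | some q => obtain ⟨u, β⟩ := q; simp [dmul, Finsupp.sum_single_index, tdot]
            have s1 : sizeOf (SchT.node c0 [] x1 none) ≤ n := by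
              simp only [SchT.node.sizeOf_spec, Option.none.sizeOf_spec, Prod.mk.sizeOf_spec,
                List.cons.sizeOf_spec, List.nil.sizeOf_spec] at hT ⊢
              have := one_le_sizeOf_opt c1
              omega
            have s2 : sizeOf (SchT.node c1 mid' xm none) ≤ n := by
              simp only [SchT.node.sizeOf_spec, Option.none.sizeOf_spec, Prod.mk.sizeOf_spec,
                List.cons.sizeOf_spec, List.nil.sizeOf_spec] at hT ⊢
              have := one_le_sizeOf_opt c0
              omega
            rw [← e, hgd, ih _ s1, ih _ s2]
            have hpd := phi_dot k prec' succ' dot' f h4 h7 [] c0 x1 c1 mid' xm none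
            simp only [List.nil_append] at hpd
            rw [← hpd]
          | nil =>
            cases c0 with
            | none =>
              have h := hgf xm
              simp only [stree] at h
              rw [h]
              simp [phi]
            | some p =>
              obtain ⟨t, α⟩ := p
              have e : dsucc k α (Finsupp.single t (1:k)) (Finsupp.single (stree xm) 1)
                  = Finsupp.single (SchT.node (some (t, α)) [] xm none) (1:k) := by
                simp [dsucc, Finsupp.sum_single_index, tsucc, stree]
              have s1 : sizeOf t ≤ n := by
                simp only [SchT.node.sizeOf_spec, Option.some.sizeOf_spec, Prod.mk.sizeOf_spec,
                  Option.none.sizeOf_spec, List.nil.sizeOf_spec] at hT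
                omega
              rw [← e, hgs, ih _ s1, hgf xm]
              simp [phi, stree]
    refine Finsupp.lhom_ext fun T b => ?_
    have hb : (Finsupp.single T b : SchT X Ω →₀ k) = b • Finsupp.single T 1 := by
      simp [Finsupp.smul_single]
    rw [hb, map_smul, map_smul, hsingle (sizeOf T) T le_rfl, lphi_single]
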